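/- Let (V, φ) be a nonsingular skew-symmetric bilinear form on a finitely generated free ℤ-module of rank 2k (a symplectic ℤ-module), let u ∈ V be unimodular (φ(u, w) = 1 for some w) with, and let v ∈ V satisfy φ(u, v) = 0. Then for any a ∈ ℤ, the transvection τ_{u,a,v}(x) = x + u·φ(v,x) + v·φ(u,x) + u·a·φ(u,x) is an element of the symplectic group Sp(V, φ), and the subgroup of Sp(V, φ) generated by all such transvections (over all valid u, a, v) acts transitively on the set of unimodular vectors of V. -/

import Mathlib

/-- The symplectic transvection `τ_{u,a,v}` for a bilinear form over `ℤ`. -/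
def sympTransvection {V : Type*} [AddCommGroup V] [Module ℤ V]
    (φ : V →ₗ[ℤ] V →ₗ[ℤ] ℤ) (u : V) (a : ℤ) (v : V) (x : V) : V :=
  x + φ v x • u + φ u x • v + (a * φ u x) • u

/- ## Auxiliary integer arithmetic -/

/-- States `(c,s)` from which one can reach `c = 1` by the two elementary moves
`c ↦ c + a·s` and `s ↦ s + a·c`. -/
inductive SGood : ℤ → ℤ → Prop
  | base (s : ℤ) : SGood 1 s
  | m1 (c s a : ℤ) : SGood (c + a * s) s → SGood c s
  | m2 (c s a : ℤ) : SGood c (s + a * c) → SGood c s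

lemma sgood_neg_right {c s : ℤ} (h : SGood c s) : SGood c (-s) := by
  induction h with
  | base s => exact SGood.base _
  | m1 c s a h ih =>
    refine SGood.m1 c (-s) (-a) ?_
    have e : c + -a * -s = c + a * s := by ring
    rwa [e]
  | m2 c s a h ih =>
    refine SGood.m2 c (-s) (-a) ?_
    have e : -s + -a * c = -(s + a * c) := by ring
    rwa [e]

lemma sgood_neg_one (s : ℤ) : SGood (-1) s := by
  refine SGood.m2 _ _ (s - 1) ?_
  have h : s + (s - 1) * -1 = 1 := by ring
  rw [h]
  refine SGood.m1 _ _ 2 ?_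
  have h2 : (-1 : ℤ) + 2 * 1 = 1 := by norm_num
  rw [h2]
  exact SGood.base 1

lemma sgood_of_unit {c : ℤ} (hc : IsUnit c) (s : ℤ) : SGood c s := by
  rcases Int.isUnit_iff.mp hc with h | h <;> subst h
  · exact SGood.base s
  · exact sgood_neg_one s

lemma sgood_aux : ∀ n : ℕ, ∀ s c : ℤ, 0 ≤ s → s.natAbs ≤ n → IsCoprime c s → SGood c s := by
  intro n
  induction n with
  | zero =>
    intro s c hs hn hcop
    have h0 : s = 0 := by omega
    subst h0
    exact sgood_of_unit (isCoprime_zero_right.mp hcop) 0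
  | succ n ih =>
    intro s c hs hn hcop
    by_cases h0 : s = 0
    · subst h0
      exact sgood_of_unit (isCoprime_zero_right.mp hcop) 0
    have hspos : 0 < s := lt_of_le_of_ne hs (Ne.symm h0)
    have hr' : c + -(c / s) * s = c % s := by rw [Int.emod_def c s]; ring
    have hr0 : 0 ≤ c % s := Int.emod_nonneg c h0
    have hrs : c % s < s := Int.emod_lt_of_pos c hspos
    have hcr : IsCoprime (c % s) s := by
      rw [← hr']; exact hcop.add_mul_right_left _
    refine SGood.m1 c s (-(c / s)) ?_
    rw [hr']
    by_cases hrz : c % s = 0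
    · rw [hrz] at hcr ⊢
      refine SGood.m1 0 s 1 ?_
      have e : (0 : ℤ) + 1 * s = s := by ring
      rw [e]
      exact sgood_of_unit (isCoprime_zero_left.mp hcr) s
    have hrpos : 0 < c % s := lt_of_le_of_ne hr0 (Ne.symm hrz)
    refine SGood.m2 (c % s) s (-(s / (c % s))) ?_
    have hsr : s + -(s / (c % s)) * (c % s) = s % (c % s) := by
      rw [Int.emod_def s (c % s)]; ring
    rw [hsr]
    have h1 : s % (c % s) < c % s := Int.emod_lt_of_pos s hrpos
    have h2 : 0 ≤ s % (c % s) := Int.emod_nonneg s hrz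
    refine ih (s % (c % s)) (c % s) h2 (by omega) ?_
    have h3 := hcr.add_mul_right_right (-(s / (c % s)))
    rwa [hsr] at h3

lemma sgood_of_coprime {c s : ℤ} (h : IsCoprime c s) : SGood c s := by
  rcases le_total 0 s with hs | hs
  · exact sgood_aux s.natAbs s c hs le_rfl h
  · have h2 := sgood_aux (-s).natAbs (-s) c (by omega) le_rfl h.neg_right
    simpa using sgood_neg_right h2

/-- The stable-range-two property of `ℤ`. -/
lemma exists_coprime_shift (c s f : ℤ) (hc : c ≠ 0)
    (h : ∃ α β γ : ℤ, α * c + β * s + γ * f = 1) :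
    ∃ t : ℤ, IsCoprime c (s + t * f) := by
  obtain ⟨α, β, γ, habc⟩ := h
  set C := c.natAbs with hC
  set S := s.natAbs with hS
  have hC0 : C ≠ 0 := Int.natAbs_ne_zero.mpr hc
  set G := Nat.gcd C (S ^ C) with hG
  have hGdvd : G ∣ C := Nat.gcd_dvd_left _ _
  have hG0 : G ≠ 0 := fun h0 => hC0 (Nat.eq_zero_of_gcd_eq_zero_left h0)
  refine ⟨(C / G : ℕ), ?_⟩
  rw [Int.isCoprime_iff_gcd_eq_one]
  by_contra hg
  set g := Int.gcd c (s + (C / G : ℕ) * f) with hgdef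
  have hgne : g ≠ 0 := by
    intro h0
    exact hc ((Int.gcd_eq_zero_iff.mp h0).1)
  set p := g.minFac with hp
  have hpp : p.Prime := Nat.minFac_prime hg
  have hppz : Prime (p : ℤ) := Nat.prime_iff_prime_int.mp hpp
  have hpg : (p : ℤ) ∣ (g : ℤ) := Int.natCast_dvd_natCast.mpr (Nat.minFac_dvd g)
  have hpc : (p : ℤ) ∣ c := hpg.trans (Int.gcd_dvd_left _ _)
  have hpsf : (p : ℤ) ∣ s + (C / G : ℕ) * f := hpg.trans (Int.gcd_dvd_right _ _)
  have hpC : p ∣ C := by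
    rw [← Int.natAbs_dvd_natAbs] at hpc
    simpa using hpc
  by_cases hps : (p : ℤ) ∣ s
  · have hpf : ¬ (p : ℤ) ∣ f := by
      intro hpf
      have h1 : (p : ℤ) ∣ 1 := by
        rw [← habc]
        exact dvd_add (dvd_add (Dvd.dvd.mul_left hpc α) (Dvd.dvd.mul_left hps β))
          (Dvd.dvd.mul_left hpf γ)
      exact hppz.not_unit (isUnit_of_dvd_one h1)
    have hpt : ¬ p ∣ C / G := by
      by_cases hs0 : s = 0
      · have hS0 : S = 0 := by simp [hS, hs0]
        have hGC : G = C := by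
          rw [hG, hS0, Nat.zero_pow (Nat.pos_of_ne_zero hC0)]
          exact Nat.gcd_zero_right C
        rw [hGC, Nat.div_self (Nat.pos_of_ne_zero hC0)]
        exact Nat.Prime.not_dvd_one hpp
      · have hS0 : S ≠ 0 := Int.natAbs_ne_zero.mpr hs0
        have hSC0 : S ^ C ≠ 0 := pow_ne_zero _ hS0
        have hpS : p ∣ S := by
          rw [← Int.natAbs_dvd_natAbs] at hps
          simpa using hps
        have hfacG : G.factorization p = C.factorization p := by
          rw [hG, Nat.factorization_gcd hC0 hSC0]
          rw [Finsupp.inf_apply, Nat.factorization_pow]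
          simp only [Finsupp.smul_apply, smul_eq_mul]
          have h1 : 1 ≤ S.factorization p := Nat.Prime.factorization_pos_of_dvd hpp hS0 hpS
          have h2 : C.factorization p < C := Nat.factorization_lt p hC0
          have h3 : C ≤ C * S.factorization p := Nat.le_mul_of_pos_right C h1
          omega
        have hfac0 : (C / G).factorization p = 0 := by
          rw [Nat.factorization_div hGdvd]
          simp [hfacG]
        intro hdvd
        have hCG0 : C / G ≠ 0 := by
          have h4 := Nat.div_pos (Nat.le_of_dvd (Nat.pos_of_ne_zero hC0) hGdvd)
            (Nat.pos_of_ne_zero hG0)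
          omega
        have h5 := Nat.Prime.factorization_pos_of_dvd hpp hCG0 hdvd
        omega
    have h6 : (p : ℤ) ∣ (C / G : ℕ) * f := (Int.dvd_add_right hps).mp hpsf
    rcases hppz.dvd_mul.mp h6 with h | h
    · exact hpt (Int.natCast_dvd_natCast.mp h)
    · exact hpf h
  · have hpS : ¬ p ∣ S := fun hd => hps (by rw [← Int.natAbs_dvd_natAbs]; simpa using hd)
    have hpSC : ¬ p ∣ S ^ C := fun hd => hpS (hpp.dvd_of_dvd_pow hd)
    have hpG : ¬ p ∣ G := fun hd => hpSC (hd.trans (Nat.gcd_dvd_right _ _))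
    have hpCG : p ∣ C / G := by
      have hmul : C / G * G = C := Nat.div_mul_cancel hGdvd
      rcases (Nat.Prime.dvd_mul hpp).mp (hmul ▸ hpC) with h | h
      · exact h
      · exact absurd h hpG
    have h1 : (p : ℤ) ∣ (C / G : ℕ) * f := Dvd.dvd.mul_right (Int.natCast_dvd_natCast.mpr hpCG) f
    exact hps ((Int.dvd_add_right h1).mp (by rwa [add_comm] at hpsf))

/- ## The transvections as linear equivalences -/

section ST
variable {V : Type*} [AddCommGroup V] (φ : V →ₗ[ℤ] V →ₗ[ℤ] ℤ)

lemma st_skew (halt : ∀ x : V, φ x x = 0) (x y : V) : φ x y = - φ y x := by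
  have h := halt (x + y)
  simp only [map_add, LinearMap.add_apply, halt] at h
  linarith

def stMap (u : V) (a : ℤ) (v : V) : V →ₗ[ℤ] V where
  toFun x := sympTransvection φ u a v x
  map_add' x y := by
    simp only [sympTransvection, map_add, mul_add, add_smul]
    abel
  map_smul' c x := by
    simp only [sympTransvection, map_smul, smul_eq_mul, RingHom.id_apply, smul_add, mul_smul,
      smul_comm c a]

lemma stMap_apply (u : V) (a : ℤ) (v : V) (x : V) :
    stMap φ u a v x = sympTransvection φ u a v x := rfl

lemma stMap_comp (halt : ∀ x : V, φ x x = 0) (u : V) (a : ℤ) (v : V) (huv : φ u v = 0) :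
    (stMap φ u (-a) (-v)).comp (stMap φ u a v) = LinearMap.id := by
  have hvu : φ v u = 0 := by rw [st_skew φ halt, huv, neg_zero]
  ext x
  simp only [LinearMap.comp_apply, stMap_apply, sympTransvection, LinearMap.id_apply,
    map_add, map_smul, map_neg, LinearMap.add_apply, LinearMap.neg_apply, LinearMap.smul_apply,
    halt, huv, hvu, smul_eq_mul, mul_zero, add_zero, zero_add, neg_zero, mul_neg, neg_neg,
    zero_smul, zero_mul, neg_smul, smul_neg, neg_one_smul, neg_mul]
  abel

def stEquiv (halt : ∀ x : V, φ x x = 0) (u : V) (a : ℤ) (v : V) (huv : φ u v = 0) : V ≃ₗ[ℤ] V :=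
  LinearEquiv.ofLinear (stMap φ u a v) (stMap φ u (-a) (-v))
    (by have h := stMap_comp φ halt u (-a) (-v) (by rw [map_neg, huv, neg_zero])
        simpa using h)
    (stMap_comp φ halt u a v huv)

lemma stEquiv_apply (halt : ∀ x : V, φ x x = 0) (u : V) (a : ℤ) (v : V) (huv : φ u v = 0)
    (x : V) : stEquiv φ halt u a v huv x = sympTransvection φ u a v x := rfl

lemma stEquiv_preserves (halt : ∀ x : V, φ x x = 0) (u : V) (a : ℤ) (v : V) (huv : φ u v = 0)
    (x y : V) : φ (stEquiv φ halt u a v huv x) (stEquiv φ halt u a v huv y) = φ x y := by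
  have hvu : φ v u = 0 := by rw [st_skew φ halt, huv, neg_zero]
  have hxu := st_skew φ halt x u
  have hxv := st_skew φ halt x v
  rw [stEquiv_apply, stEquiv_apply]
  simp only [sympTransvection, map_add, map_smul, LinearMap.add_apply, LinearMap.smul_apply,
    halt, huv, hvu, smul_eq_mul, mul_zero, add_zero, zero_add]
  rw [hxu, hxv]
  ring

/-- Pairing of any vector with a transvected vector. -/
lemma st_pair (halt : ∀ x : V, φ x x = 0) (u : V) (a : ℤ) (v : V) (huv : φ u v = 0)
    (y x : V) :
    φ y (stEquiv φ halt u a v huv x) =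
      φ y x + φ v x * φ y u + φ u x * φ y v + a * φ u x * φ y u := by
  rw [stEquiv_apply]
  simp only [sympTransvection, map_add, map_smul, smul_eq_mul]

/- ## The group generated by the transvections -/

def stSet : Set (V ≃ₗ[ℤ] V) :=
  {g : V ≃ₗ[ℤ] V | ∃ (u₀ v₀ : V) (a₀ : ℤ), (∃ w : V, φ u₀ w = 1) ∧ φ u₀ v₀ = 0 ∧
      ∀ x : V, g x = sympTransvection φ u₀ a₀ v₀ x}

lemma stEquiv_mem (halt : ∀ x : V, φ x x = 0) {u v : V} (a : ℤ)
    (hu : ∃ w : V, φ u w = 1) (huv : φ u v = 0) :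
    stEquiv φ halt u a v huv ∈ stSet φ :=
  ⟨u, v, a, hu, huv, fun _ => rfl⟩

def Conn (u u' : V) : Prop := ∃ g ∈ Subgroup.closure (stSet φ), g u = u'

lemma conn_step {u u' : V} (g : V ≃ₗ[ℤ] V) (hg : g ∈ Subgroup.closure (stSet φ))
    (h : Conn φ u (g u')) : Conn φ u u' := by
  obtain ⟨h₁, hm, he⟩ := h
  refine ⟨g⁻¹ * h₁, mul_mem (inv_mem hg) hm, ?_⟩
  show g⁻¹ (h₁ u) = u'
  rw [he]
  exact g.symm_apply_apply u'

/-- If `φ u v' = 1` then a single transvection carries `u` to `v'`. -/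
lemma conn_of_one (halt : ∀ x : V, φ x x = 0) (u v' : V) (h1 : φ u v' = 1) :
    Conn φ u v' := by
  have hperp : φ (v' - u) (0 : V) = 0 := map_zero _
  have hval : φ (v' - u) u = -1 := by
    have h2 := st_skew φ halt v' u
    simp only [map_sub, LinearMap.sub_apply, halt] at *
    rw [h2, h1]; ring
  have huni : ∃ w : V, φ (v' - u) w = 1 := by
    refine ⟨-u, ?_⟩
    rw [map_neg, hval]; ring
  refine ⟨stEquiv φ halt (v' - u) (-1) 0 hperp,
    Subgroup.subset_closure (stEquiv_mem φ halt (-1) huni hperp), ?_⟩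
  rw [stEquiv_apply]
  simp only [sympTransvection, map_zero, LinearMap.zero_apply, zero_smul, add_zero, smul_zero,
    hval]
  have hone : (-1 : ℤ) * -1 = (1 : ℤ) := by norm_num
  rw [hone, one_smul]
  abel

/-- Transfer the Euclidean reduction to transvection moves. -/
lemma conn_of_good (halt : ∀ x : V, φ x x = 0) (u w : V) (hw : φ u w = 1)
    {c s : ℤ} (hgood : SGood c s) :
    ∀ v' : V, φ u v' = c → φ w v' = s → Conn φ u v' := by
  have hwu : φ w u = -1 := by rw [st_skew φ halt, hw]
  induction hgood with
  | base s =>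
    intro v' hc _
    exact conn_of_one φ halt u v' hc
  | m1 c s a h ih =>
    intro v' hc hs
    have hperp : φ w (0 : V) = 0 := map_zero _
    have huni : ∃ w₁ : V, φ w w₁ = 1 := ⟨-u, by rw [map_neg, hwu]; ring⟩
    set g := stEquiv φ halt w a 0 hperp with hg
    refine conn_step φ g (Subgroup.subset_closure (stEquiv_mem φ halt a huni hperp)) ?_
    refine ih (g v') ?_ ?_
    · rw [hg, st_pair φ halt w a 0 hperp u v']
      simp only [map_zero, LinearMap.zero_apply, hc, hs, hw]
      ring
    · rw [hg, st_pair φ halt w a 0 hperp w v']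
      simp only [map_zero, LinearMap.zero_apply, hs, halt w]
      ring
  | m2 c s a h ih =>
    intro v' hc hs
    have hperp : φ u (0 : V) = 0 := map_zero _
    have huni : ∃ w₁ : V, φ u w₁ = 1 := ⟨w, hw⟩
    set g := stEquiv φ halt u (-a) 0 hperp with hg
    refine conn_step φ g (Subgroup.subset_closure (stEquiv_mem φ halt (-a) huni hperp)) ?_
    refine ih (g v') ?_ ?_
    · rw [hg, st_pair φ halt u (-a) 0 hperp u v']
      simp only [map_zero, LinearMap.zero_apply, hc, halt u]
      ring
    · rw [hg, st_pair φ halt u (-a) 0 hperp w v']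
      simp only [map_zero, LinearMap.zero_apply, hc, hs, hwu]
      ring

/-- When `φ u u' = 0`, one transvection makes the pairing `1`. -/
lemma st_zero_move (halt : ∀ x : V, φ x x = 0) (u w u' w' : V)
    (hw : φ u w = 1) (hw' : φ u' w' = 1) (hc : φ u u' = 0) :
    ∃ g ∈ Subgroup.closure (stSet φ), φ u (g u') = 1 := by
  have hwu : φ w u = -1 := by rw [st_skew φ halt, hw]
  set x := -w' with hx
  set v₀ := x + φ w x • u with hv₀
  have hperp : φ w v₀ = 0 := by
    rw [hv₀, map_add, map_smul, smul_eq_mul, hwu]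
    ring
  have huni : ∃ w₁ : V, φ w w₁ = 1 := ⟨-u, by rw [map_neg, hwu]; ring⟩
  set a := -(φ u x) with ha
  refine ⟨stEquiv φ halt w a v₀ hperp,
    Subgroup.subset_closure (stEquiv_mem φ halt a huni hperp), ?_⟩
  rw [st_pair φ halt w a v₀ hperp u u']
  have hxu' : φ x u' = 1 := by
    rw [hx, map_neg, LinearMap.neg_apply, st_skew φ halt w' u', hw']
    ring
  have h1 : φ v₀ u' = 1 := by
    rw [hv₀, map_add, LinearMap.add_apply, map_smul, LinearMap.smul_apply, smul_eq_mul,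
      hxu', hc]
    ring
  have h2 : φ u v₀ = φ u x := by
    rw [hv₀, map_add, map_smul, smul_eq_mul, halt u]
    ring
  rw [hc, h1, h2, hw, ha]
  ring

/-- Phase 0 : when `φ u u' ≠ 0`, one transvection based at `u` makes
`φ w (g u')` coprime to `φ u u'`. -/
lemma st_coprime_move (halt : ∀ x : V, φ x x = 0) (u w u' w' : V)
    (hw : φ u w = 1) (hw' : φ u' w' = 1) (hc : φ u u' ≠ 0) :
    ∃ g ∈ Subgroup.closure (stSet φ),
      φ u (g u') = φ u u' ∧ IsCoprime (φ u u') (φ w (g u')) := by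
  set c := φ u u' with hcdef
  set s := φ w u' with hsdef
  set z := u' + c • w with hz
  set K := LinearMap.ker (φ u) with hK
  set I : Ideal ℤ := Submodule.map (φ.flip z) K with hI
  obtain ⟨f, hfI⟩ : ∃ f : ℤ, I = Ideal.span {f} := (IsPrincipalIdealRing.principal I).principal
  -- a vector realizing the generator f
  have hfmem : f ∈ I := by rw [hfI]; exact Ideal.mem_span_singleton_self f
  obtain ⟨v₀, hv₀K, hv₀f⟩ := Submodule.mem_map.mp hfmem
  have hv₀u : φ u v₀ = 0 := LinearMap.mem_ker.mp hv₀K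
  have hv₀z : φ v₀ z = f := by rw [← hv₀f]; rfl
  -- the triple (c, s, f) is unimodular
  have htriple : ∃ α β γ : ℤ, α * c + β * s + γ * f = 1 := by
    set x := -w' with hx
    set vx := x - φ u x • w with hvx
    have hvxK : vx ∈ K := by
      rw [hK, LinearMap.mem_ker, hvx, map_sub, map_smul, smul_eq_mul, hw]
      ring
    have hmem : φ vx z ∈ I := by
      rw [hI]
      exact Submodule.mem_map.mpr ⟨vx, hvxK, rfl⟩
    rw [hfI, Ideal.mem_span_singleton'] at hmem
    obtain ⟨γ, hγ⟩ := hmem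
    have hwz : φ w z = s := by
      rw [hz, map_add, map_smul, smul_eq_mul, halt w]
      ring
    have hxu' : φ x u' = 1 := by
      rw [hx, map_neg, LinearMap.neg_apply, st_skew φ halt w' u', hw']
      ring
    have hxz : φ x z = 1 + c * φ x w := by
      rw [hz, map_add, map_smul, smul_eq_mul, hxu']
    have hvxz : φ vx z = 1 + c * φ x w - φ u x * s := by
      rw [hvx, map_sub, LinearMap.sub_apply, map_smul, LinearMap.smul_apply, smul_eq_mul,
        hxz, hwz]
    refine ⟨-(φ x w), φ u x, γ, ?_⟩
    rw [hγ, hvxz]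
    ring
  obtain ⟨t, ht⟩ := exists_coprime_shift c s f hc htriple
  have hperp : φ u ((-t) • v₀) = 0 := by
    rw [map_smul, hv₀u, smul_zero]
  have huni : ∃ w₁ : V, φ u w₁ = 1 := ⟨w, hw⟩
  refine ⟨stEquiv φ halt u 0 ((-t) • v₀) hperp,
    Subgroup.subset_closure (stEquiv_mem φ halt 0 huni hperp), ?_, ?_⟩
  · rw [st_pair φ halt u 0 ((-t) • v₀) hperp u u']
    simp only [halt u, hperp]
    ring
  · rw [st_pair φ halt u 0 ((-t) • v₀) hperp w u']
    have h1 : φ ((-t) • v₀) u' = -t * φ v₀ u' := by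
      rw [map_smul, LinearMap.smul_apply, smul_eq_mul]
    have h2 : φ w ((-t) • v₀) = -t * φ w v₀ := by
      rw [map_smul, smul_eq_mul]
    have hwu : φ w u = -1 := by rw [st_skew φ halt, hw]
    have hv₀w : φ v₀ w = - φ w v₀ := st_skew φ halt v₀ w
    have hfval : f = φ v₀ u' + c * φ v₀ w := by
      rw [← hv₀z, hz, map_add, map_smul, smul_eq_mul]
    have heq : s + φ ((-t) • v₀) u' * φ w u + φ u u' * φ w ((-t) • v₀) +
        0 * φ u u' * φ w u = s + t * f := by
      rw [h1, h2, hwu, hfval, hv₀w, ← hcdef]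
      ring
    rw [heq]
    exact ht
end ST

/- ## Main theorem -/

/-- For a nonsingular alternating form on a finitely generated free `ℤ`-module of
rank `2k`: every transvection `τ_{u,a,v}` (with `u` unimodular, `φ(u,v) = 0`) is
an element of the symplectic group, and the group generated by all such
transvections acts transitively on the unimodular vectors. -/
theorem symplectic_transvections_transitive
    (V : Type*) [AddCommGroup V] [Module ℤ V] [Module.Free ℤ V] [Module.Finite ℤ V]
    (k : ℕ) (hrk : Module.finrank ℤ V = 2 * k)
    (φ : V →ₗ[ℤ] V →ₗ[ℤ] ℤ) (halt : ∀ x : V, φ x x = 0)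
    (hns : Function.Bijective φ) :
    (∀ (u v : V) (a : ℤ), (∃ w : V, φ u w = 1) → φ u v = 0 →
      ∃ g : V ≃ₗ[ℤ] V, (∀ x : V, g x = sympTransvection φ u a v x) ∧
        ∀ x y : V, φ (g x) (g y) = φ x y) ∧
    (∀ u u' : V, (∃ w : V, φ u w = 1) → (∃ w : V, φ u' w = 1) →
      ∃ g ∈ Subgroup.closure {g : V ≃ₗ[ℤ] V |
          ∃ (u₀ v₀ : V) (a₀ : ℤ), (∃ w : V, φ u₀ w = 1) ∧ φ u₀ v₀ = 0 ∧
            ∀ x : V, g x = sympTransvection φ u₀ a₀ v₀ x},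
        g u = u') := by
  rename_i instM instF instFin
  letI : Unique (Module ℤ V) := AddCommGroup.uniqueIntModule
  have e : instM = AddCommGroup.toIntModule V := Subsingleton.elim _ _
  subst e
  constructor
  · intro u v a _ huv
    exact ⟨stEquiv φ halt u a v huv, fun _ => rfl, stEquiv_preserves φ halt u a v huv⟩
  · intro u u' hu hu'
    obtain ⟨w, hw⟩ := hu
    obtain ⟨w', hw'⟩ := hu'
    show Conn φ u u'
    by_cases hc : φ u u' = 0
    · obtain ⟨g, hgmem, hgval⟩ := st_zero_move φ halt u w u' w' hw hw' hc
      exact conn_step φ g hgmem (conn_of_one φ halt u (g u') hgval)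
    · obtain ⟨g, hgmem, hgc, hgcop⟩ := st_coprime_move φ halt u w u' w' hw hw' hc
      exact conn_step φ g hgmem
        (conn_of_good φ halt u w hw (sgood_of_coprime hgcop) (g u') hgc rfl)
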